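/- Let L ⊆ R be a ring extension, I ⊆ R an ideal, and h ∈ R such that the class of h in R/I is integral over L with minimal polynomial p = b·X^j + f·X^{j+1} ∈ L[X], where b ∈ L is nonzero (i.e., j is maximal with X^j dividing p). Set J = (√I : h^∞) (the saturation of the radical of I by h). Then h' := −f(h)/b ∈ R satisfies h·h' − 1 ∈ J; in particular the class of h is invertible in R/J. -/
import Mathlib


/-- If the class of `h` in `R/I` is integral over `L` with minimal polynomial
`p = C b * X^j + f * X^(j+1)` (`b ≠ 0`, i.e. `j` maximal with `X^j ∣ p`), then
`h' := -f(h)/b` satisfies `h·h' - 1 ∈ √I : h`. -/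
theorem inverse_mod_saturated_radical {L R : Type*} [Field L] [CommRing R] [Algebra L R]
    (I : Ideal R) (h : R) (b : L) (j : ℕ) (f : Polynomial L)
    (hint : IsIntegral L (Ideal.Quotient.mk I h))
    (hb : b ≠ 0)
    (hmin : minpoly L (Ideal.Quotient.mk I h) =
      Polynomial.C b * Polynomial.X ^ j + f * Polynomial.X ^ (j + 1)) :
    h * (-(algebraMap L R b⁻¹ * Polynomial.aeval h f)) - 1 ∈
      (I.radical).colon (Ideal.span {h}) := by
  set p := minpoly L (Ideal.Quotient.mk I h)
  have hp : Polynomial.aeval h p ∈ I := by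
    rw [← Ideal.Quotient.eq_zero_iff_mem]
    have := Polynomial.aeval_algHom_apply (Ideal.Quotient.mkₐ L I) h p
    simpa [Ideal.Quotient.mkₐ_eq_mk] using (this.symm.trans (minpoly.aeval L _))
  set g : R := algebraMap L R b + h * Polynomial.aeval h f with hg
  clear_value g
  have h1 : h ^ j * g ∈ I.radical := by
    apply Ideal.le_radical
    have : Polynomial.aeval h p = h ^ j * g := by
      rw [hmin]
      simp [hg, Polynomial.aeval_def, Polynomial.eval₂_add, Polynomial.eval₂_mul]
      ring
    rwa [this] at hp
  have h2 : h * g ∈ I.radical := by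
    apply Ideal.mem_radical_of_pow_mem (m := j + 1)
    have : (h * g) ^ (j + 1) = (h ^ j * g) * (h * g ^ j) := by ring
    rw [this]
    exact Ideal.mul_mem_right _ _ h1
  rw [Ideal.mem_colon_span_singleton, mul_comm]
  have hinv : algebraMap L R b⁻¹ * algebraMap L R b = 1 := by
    rw [← map_mul, inv_mul_cancel₀ hb, map_one]
  have key : h * (h * (-(algebraMap L R b⁻¹ * Polynomial.aeval h f)) - 1)
      = -(algebraMap L R b⁻¹) * (h * g) := by
    rw [hg]; linear_combination h * hinv
  rw [key]
  exact Ideal.mul_mem_left _ _ h2
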